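/- Let X be a metric space, E ⊆ X a subset, and x ∈ E. Then the following are equivalent: (1) E is not porous at x; (2) for every metric space Y and every Lipschitz map f : X → Y, Lip(f|_E; x) = Lip(f; x); (3) Lip(d(E,·); x) = 0. -/

import Mathlib

open Filter Set
open scoped ENNReal NNReal Topology

/-- The pointwise Lipschitz constant `Lip(f; x)`:
`limsup_{y → x, y ≠ x} d(f x, f y) / d(x, y)` (equal to `0` at isolated points). -/
noncomputable def pLip {X Y : Type*} [MetricSpace X] [MetricSpace Y]
    (f : X → Y) (x : X) : ℝ≥0∞ :=
  Filter.limsup (fun y => edist (f x) (f y) / edist x y) (𝓝[≠] x)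

/-- The pointwise Lipschitz constant of the restriction `f|_E` at `x`. -/
noncomputable def pLipOn {X Y : Type*} [MetricSpace X] [MetricSpace Y]
    (f : X → Y) (E : Set X) (x : X) : ℝ≥0∞ :=
  Filter.limsup (fun y => edist (f x) (f y) / edist x y) (𝓝[E \ {x}] x)

/-- `E` is porous at `x ∈ E`: there are `ε > 0` and `y i → x` with
`E ∩ B(y i, ε · d(x, y i)) = ∅` for all `i`. -/
def PorousAt {X : Type*} [MetricSpace X] (E : Set X) (x : X) : Prop :=
  ∃ ε : ℝ, 0 < ε ∧ ∃ y : ℕ → X, Tendsto y atTop (𝓝 x) ∧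
    ∀ i, E ∩ Metric.closedBall (y i) (ε * dist x (y i)) = ∅

/-- Aux: the restricted pointwise Lipschitz constant of `infDist · E` at `x ∈ E` vanishes. -/
theorem pLipOn_infDist_aux {X : Type*} [MetricSpace X] {E : Set X} {x : X} (hx : x ∈ E) :
    pLipOn (fun z => Metric.infDist z E) E x = 0 := by
  rw [← le_zero_iff]
  apply Filter.limsup_le_of_le (by isBoundedDefault)
  filter_upwards [eventually_mem_nhdsWithin] with z hz
  simp [Metric.infDist_zero_of_mem hx, Metric.infDist_zero_of_mem hz.1]

/-- Aux: if `E` is porous at `x ∈ E` then the pointwise Lipschitz constant of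
`infDist · E` at `x` is nonzero. -/
theorem porous_pLip_aux {X : Type*} [MetricSpace X] {E : Set X} {x : X} (hx : x ∈ E)
    (hP : PorousAt E x) : pLip (fun z => Metric.infDist z E) x ≠ 0 := by
  obtain ⟨ε, hε, y, hy, hball⟩ := hP
  have hne : ∀ i, y i ≠ x := by
    intro i h
    have hxm : x ∈ E ∩ Metric.closedBall (y i) (ε * dist x (y i)) := by
      refine ⟨hx, ?_⟩
      rw [h]
      simp [Metric.mem_closedBall]
    rw [hball i] at hxm
    exact hxm
  have hy' : Tendsto y atTop (𝓝[≠] x) := by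
    rw [tendsto_nhdsWithin_iff]
    exact ⟨hy, Filter.Eventually.of_forall hne⟩
  have hval : ∀ i, ENNReal.ofReal ε ≤
      edist ((fun z => Metric.infDist z E) x) ((fun z => Metric.infDist z E) (y i))
        / edist x (y i) := by
    intro i
    have hd : 0 < dist x (y i) := dist_pos.mpr fun h => hne i h.symm
    have hlow : ε * dist x (y i) ≤ Metric.infDist (y i) E := by
      by_contra hcon
      push_neg at hcon
      obtain ⟨w, hwE, hw⟩ := (Metric.infDist_lt_iff ⟨x, hx⟩).mp hcon
      have : w ∈ E ∩ Metric.closedBall (y i) (ε * dist x (y i)) :=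
        ⟨hwE, Metric.mem_closedBall.mpr (by rw [dist_comm]; exact hw.le)⟩
      rw [hball i] at this
      exact this
    have h0 : Metric.infDist x E = 0 := Metric.infDist_zero_of_mem hx
    have hnn : 0 ≤ Metric.infDist (y i) E := Metric.infDist_nonneg
    simp only [h0]
    have hed : edist (0 : ℝ) (Metric.infDist (y i) E) = ENNReal.ofReal (Metric.infDist (y i) E) := by
      rw [edist_dist, Real.dist_eq]
      congr 1
      rw [abs_of_nonpos (by linarith)]
      ring
    rw [hed, edist_dist]
    have h1 : ENNReal.ofReal (ε * dist x (y i)) ≤ ENNReal.ofReal (Metric.infDist (y i) E) :=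
      ENNReal.ofReal_le_ofReal hlow
    have h2 : ENNReal.ofReal (ε * dist x (y i)) / ENNReal.ofReal (dist x (y i))
        = ENNReal.ofReal ε := by
      rw [ENNReal.ofReal_mul hε.le, mul_div_assoc,
        ENNReal.div_self (ENNReal.ofReal_pos.mpr hd).ne' (by simp), mul_one]
    calc ENNReal.ofReal ε
        = ENNReal.ofReal (ε * dist x (y i)) / ENNReal.ofReal (dist x (y i)) := h2.symm
      _ ≤ ENNReal.ofReal (Metric.infDist (y i) E) / ENNReal.ofReal (dist x (y i)) :=
          ENNReal.div_le_div_right h1 _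
  intro h0
  have hle : ENNReal.ofReal ε ≤ pLip (fun z => Metric.infDist z E) x := by
    apply Filter.le_limsup_of_frequently_le
    · exact hy'.frequently (Filter.Frequently.of_forall hval)
    · isBoundedDefault
  rw [h0, le_zero_iff, ENNReal.ofReal_eq_zero] at hle
  linarith

/-- Aux: if `E` is not porous at `x ∈ E`, then `Lip(f|_E;x) = Lip(f;x)` for every
Lipschitz `f`. -/
theorem nonporous_pLip_aux {X : Type*} [MetricSpace X] {E : Set X} {x : X} (hx : x ∈ E)
    (hP : ¬ PorousAt E x) {Y : Type*} [MetricSpace Y] (f : X → Y) (K : ℝ≥0)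
    (hf : LipschitzWith K f) : pLipOn f E x = pLip f x := by
  refine le_antisymm
    (Filter.limsup_le_limsup_of_le (nhdsWithin_mono x fun y hy => hy.2)) ?_
  by_contra hcon
  push_neg at hcon
  obtain ⟨L', hL'1, hL'2⟩ := exists_between hcon
  obtain ⟨L, hL1, hL2⟩ := exists_between hL'2
  have hLtop : L ≠ ⊤ := hL2.ne_top
  have hL'top : L' ≠ ⊤ := hL1.ne_top
  set l' := L'.toReal with hl'def
  set l := L.toReal with hldef
  set k := (K : ℝ) with hkdef
  have hk0 : 0 ≤ k := K.coe_nonneg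
  have hl'l : l' < l := (ENNReal.toReal_lt_toReal hL'top hLtop).mpr hL1
  have hl'0 : 0 ≤ l' := ENNReal.toReal_nonneg
  have hl0 : 0 < l := lt_of_le_of_lt hl'0 hl'l
  set ε := (l - l') / (2 * (l' + k + 1)) with hεdef
  have hden : 0 < l' + k + 1 := by linarith
  have hε : 0 < ε := div_pos (by linarith) (by linarith)
  set c := l' * (1 + ε) + k * ε with hcdef
  have hc0 : 0 ≤ c := by positivity
  have hεeq : ε * (2 * (l' + k + 1)) = l - l' := by
    rw [hεdef]; field_simp
  have hcl : c < l := by nlinarith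
  -- non-porosity: nearby points have points of E proportionally close
  have key : ∃ δ > (0:ℝ), ∀ y, dist x y < δ → ∃ z ∈ E, dist z y ≤ ε * dist x y := by
    by_contra hcon2
    push_neg at hcon2
    apply hP
    refine ⟨ε, hε, ?_⟩
    choose y hy1 hy2 using fun n : ℕ =>
      hcon2 (1 / (n + 1)) (by positivity)
    refine ⟨y, ?_, ?_⟩
    · rw [tendsto_iff_dist_tendsto_zero]
      apply squeeze_zero (fun n => dist_nonneg) (g := fun n : ℕ => 1 / ((n : ℝ) + 1))
      · intro n
        rw [dist_comm]
        exact (hy1 n).le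
      · exact tendsto_one_div_add_atTop_nhds_zero_nat
    · intro i
      rw [Set.eq_empty_iff_forall_notMem]
      rintro z ⟨hzE, hzB⟩
      exact absurd (Metric.mem_closedBall.mp hzB) (not_le.mpr (hy2 i z hzE))
  obtain ⟨δ, hδ, hδ'⟩ := key
  -- eventual bound on E near x
  have hev : ∀ᶠ z in 𝓝[E \ {x}] x, edist (f x) (f z) / edist x z < L' :=
    Filter.eventually_lt_of_limsup_lt hL'1
  rw [Filter.eventually_iff, Metric.mem_nhdsWithin_iff] at hev
  obtain ⟨r, hr, hball⟩ := hev
  have hEest : ∀ z ∈ E, dist x z < r → dist (f x) (f z) ≤ l' * dist x z := by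
    intro z hzE hzr
    rcases eq_or_ne z x with rfl | hzx
    · simp [mul_nonneg hl'0 dist_nonneg]
    · have hmem : z ∈ Metric.ball x r ∩ (E \ {x}) :=
        ⟨Metric.mem_ball.mpr (by rwa [dist_comm]), hzE, hzx⟩
      have hlt := hball hmem
      simp only [Set.mem_setOf_eq] at hlt
      have hd0 : edist x z ≠ 0 := by simpa using (Ne.symm hzx)
      have hdt : edist x z ≠ ⊤ := edist_ne_top x z
      rw [ENNReal.div_lt_iff (Or.inl hd0) (Or.inl hdt)] at hlt
      have hle := hlt.le
      calc dist (f x) (f z) = (edist (f x) (f z)).toReal := by rw [dist_edist]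
        _ ≤ (L' * edist x z).toReal :=
            ENNReal.toReal_mono (ENNReal.mul_ne_top hL'top hdt) hle
        _ = l' * dist x z := by rw [ENNReal.toReal_mul, dist_edist]
  -- main eventual bound
  have hmain : ∀ᶠ y in 𝓝[≠] x, edist (f x) (f y) / edist x y ≤ ENNReal.ofReal c := by
    have hm : 0 < min δ (r / (1 + ε)) := lt_min hδ (div_pos hr (by linarith))
    have h1 : ∀ᶠ y in 𝓝 x, dist x y < min δ (r / (1 + ε)) := by
      filter_upwards [Metric.ball_mem_nhds x hm] with y hy
      rw [dist_comm]
      exact Metric.mem_ball.mp hy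
    filter_upwards [nhdsWithin_le_nhds h1, eventually_mem_nhdsWithin] with y hy hyx
    have hyx' : y ≠ x := hyx
    have hdxy : 0 < dist x y := dist_pos.mpr (Ne.symm hyx')
    obtain ⟨z, hzE, hz⟩ := hδ' y (lt_of_lt_of_le hy (min_le_left _ _))
    have hxz : dist x z ≤ (1 + ε) * dist x y := by
      have ht := dist_triangle x y z
      have : dist y z ≤ ε * dist x y := by rw [dist_comm]; exact hz
      nlinarith
    have hxzr : dist x z < r := by
      have h2 : dist x y < r / (1 + ε) := lt_of_lt_of_le hy (min_le_right _ _)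
      calc dist x z ≤ (1 + ε) * dist x y := hxz
        _ < (1 + ε) * (r / (1 + ε)) :=
            mul_lt_mul_of_pos_left h2 (by linarith)
        _ = r := by field_simp
    have h3 : dist (f x) (f z) ≤ l' * dist x z := hEest z hzE hxzr
    have h4 : dist (f z) (f y) ≤ k * dist z y := hf.dist_le_mul z y
    have h5 : dist (f x) (f y) ≤ c * dist x y := by
      have ht := dist_triangle (f x) (f z) (f y)
      have h3' : dist (f x) (f z) ≤ l' * ((1 + ε) * dist x y) :=
        h3.trans (mul_le_mul_of_nonneg_left hxz hl'0)
      have h4' : dist (f z) (f y) ≤ k * (ε * dist x y) :=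
        h4.trans (mul_le_mul_of_nonneg_left hz hk0)
      nlinarith
    have hed0 : edist x y ≠ 0 := by simpa using (Ne.symm hyx')
    rw [edist_dist, edist_dist, ENNReal.div_le_iff (by simpa [edist_dist] using hed0)
      (by simp), ← ENNReal.ofReal_mul hc0]
    exact ENNReal.ofReal_le_ofReal h5
  have hfinal : pLip f x ≤ ENNReal.ofReal c :=
    Filter.limsup_le_of_le (by isBoundedDefault) hmain
  have hcL : ENNReal.ofReal c < L := by
    rw [← ENNReal.ofReal_toReal hLtop]
    exact (ENNReal.ofReal_lt_ofReal_iff hl0).mpr hcl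
  exact lt_irrefl _ (lt_of_le_of_lt hfinal (lt_trans hcL hL2))

/-- For `x ∈ E ⊆ X`, the following are equivalent: `E` is not porous at `x`;
`Lip(f|_E; x) = Lip(f; x)` for every Lipschitz map `f` into any metric space;
`Lip(d(E, ·); x) = 0`. -/
theorem stmt6 {X : Type*} [MetricSpace X] (E : Set X) (x : X) (hx : x ∈ E) :
    (¬ PorousAt E x ↔
      (∀ (Y : Type*) [MetricSpace Y] (f : X → Y) (K : ℝ≥0), LipschitzWith K f →
        pLipOn f E x = pLip f x)) ∧
    ((∀ (Y : Type*) [MetricSpace Y] (f : X → Y) (K : ℝ≥0), LipschitzWith K f →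
        pLipOn f E x = pLip f x) ↔
      pLip (fun z => Metric.infDist z E) x = 0) := by
  constructor
  · constructor
    · intro hP Y _ f K hf
      exact nonporous_pLip_aux hx hP f K hf
    · intro h hP
      have hfL : LipschitzWith 1 (fun z : X => ULift.up (Metric.infDist z E)) := by
        intro a b
        simpa [ULift.edist_eq] using (Metric.lipschitz_infDist_pt E) a b
      have h1 := h (ULift ℝ) (fun z => ULift.up (Metric.infDist z E)) 1 hfL
      have h2 : pLipOn (fun z => Metric.infDist z E) E x
          = pLip (fun z => Metric.infDist z E) x := h1
      rw [pLipOn_infDist_aux hx] at h2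
      exact porous_pLip_aux hx hP h2.symm
  · constructor
    · intro h
      have hfL : LipschitzWith 1 (fun z : X => ULift.up (Metric.infDist z E)) := by
        intro a b
        simpa [ULift.edist_eq] using (Metric.lipschitz_infDist_pt E) a b
      have h1 := h (ULift ℝ) (fun z => ULift.up (Metric.infDist z E)) 1 hfL
      have h2 : pLipOn (fun z => Metric.infDist z E) E x
          = pLip (fun z => Metric.infDist z E) x := h1
      rw [pLipOn_infDist_aux hx] at h2
      exact h2.symm
    · intro h Y _ f K hf
      have hP : ¬ PorousAt E x := fun hp => porous_pLip_aux hx hp h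
      exact nonporous_pLip_aux hx hP f K hf
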